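/- Let A be a nonnegative n×n real matrix with support. Then for every (y,z) ∈ ℝ^n × ℝ^n the Newton system is consistent: there exists w ∈ ℝ^n × ℝ^n such that H(y,z) w = −∇f(y,z). Equivalently, ∇f(y,z) is orthogonal to the null space of H(y,z). -/

import Mathlib

open Finset Matrix

lemma symm_consistent {m : Type*} [Fintype m] [DecidableEq m] (M : Matrix m m ℝ)
    (hM : Mᵀ = M) (g : m → ℝ) (hg : ∀ v : m → ℝ, M *ᵥ v = 0 → g ⬝ᵥ v = 0) :
    ∃ w : m → ℝ, M *ᵥ w = g := by
  set T := Matrix.toEuclideanLin M with hT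
  have happ : ∀ x : EuclideanSpace ℝ m, T x = M *ᵥ x := fun x => rfl
  have hadj : LinearMap.adjoint T = T := by
    rw [hT, ← Matrix.toEuclideanLin_conjTranspose_eq_adjoint]
    rw [Matrix.conjTranspose_eq_transpose_of_trivial, hM]
  have hle : LinearMap.range T ≤ (LinearMap.ker T)ᗮ := by
    rintro - ⟨x, rfl⟩
    rw [Submodule.mem_orthogonal]
    intro k hk
    rw [← hadj, LinearMap.adjoint_inner_right, LinearMap.mem_ker.mp hk,
      inner_zero_left]
  have hfr : Module.finrank ℝ (LinearMap.range T) =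
      Module.finrank ℝ ((LinearMap.ker T)ᗮ) := by
    have h1 := LinearMap.finrank_range_add_finrank_ker T
    have h2 := Submodule.finrank_add_finrank_orthogonal (LinearMap.ker T)
    omega
  have heq : LinearMap.range T = (LinearMap.ker T)ᗮ :=
    Submodule.eq_of_le_of_finrank_eq hle hfr
  have hgmem : (WithLp.equiv 2 (m → ℝ)).symm g ∈ (LinearMap.ker T)ᗮ := by
    rw [Submodule.mem_orthogonal]
    intro k hk
    have h0 : M *ᵥ (WithLp.equiv 2 (m → ℝ)) k = 0 := congrArg WithLp.ofLp (LinearMap.mem_ker.mp hk)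
    have := hg _ h0
    simpa [PiLp.inner_apply, RCLike.inner_apply, dotProduct, mul_comm] using this
  rw [← heq] at hgmem
  obtain ⟨x, hx⟩ := hgmem
  exact ⟨x, by rw [← happ x, hx]; rfl⟩

/-- if the nonnegative matrix `A` has support, then for every `(y,z)`
the Newton system `H(y,z) w = −∇f(y,z)` is consistent, where `H` is the Hessian
and `∇f` the gradient of the negative-entropy dual objective. -/
theorem stmt6 (n : ℕ) (A : Matrix (Fin n) (Fin n) ℝ) (hA : ∀ i j, 0 ≤ A i j)
    (hsupp : ∃ σ : Equiv.Perm (Fin n), ∀ i, 0 < A i (σ i))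
    (y z : Fin n → ℝ)
    (B : Matrix (Fin n) (Fin n) ℝ)
    (hB : ∀ i j, B i j = A i j * Real.exp (y i + z j))
    (H : Matrix (Fin n ⊕ Fin n) (Fin n ⊕ Fin n) ℝ)
    (hH : H = Matrix.fromBlocks
      (Matrix.diagonal fun i => ∑ j, B i j) B
      Bᵀ (Matrix.diagonal fun j => ∑ i, B i j))
    (grad : Fin n ⊕ Fin n → ℝ)
    (hgrad : grad = Sum.elim (fun i => (∑ j, B i j) - 1) fun j => (∑ i, B i j) - 1) :
    ∃ w : Fin n ⊕ Fin n → ℝ, H *ᵥ w = -grad := by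
  obtain ⟨σ, hσ⟩ := hsupp
  have hBnn : ∀ i j, 0 ≤ B i j := fun i j => by
    rw [hB]; exact mul_nonneg (hA i j) (Real.exp_pos _).le
  have hBσ : ∀ i, 0 < B i (σ i) := fun i => by
    rw [hB]; exact mul_pos (hσ i) (Real.exp_pos _)
  apply symm_consistent
  · rw [hH, Matrix.fromBlocks_transpose, Matrix.diagonal_transpose,
      Matrix.diagonal_transpose, Matrix.transpose_transpose]
  intro v hv
  set u : Fin n → ℝ := fun i => v (Sum.inl i) with hu
  set w : Fin n → ℝ := fun j => v (Sum.inr j) with hw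
  have hv' : v = Sum.elim u w := by funext p; cases p <;> rfl
  rw [hv', hH, Matrix.fromBlocks_mulVec] at hv
  have E1 : ∀ i, (∑ j, B i j * w j) = -((∑ j, B i j) * u i) := by
    intro i
    have := congrFun hv (Sum.inl i)
    simp only [Sum.elim_inl, Sum.elim_comp_inl, Sum.elim_comp_inr, Pi.add_apply,
      Pi.zero_apply, Matrix.mulVec_diagonal] at this
    have hBw : (B *ᵥ w) i = ∑ j, B i j * w j := rfl
    rw [hBw] at this
    linarith
  have E2 : ∀ j, (∑ i, B i j * u i) = -((∑ i, B i j) * w j) := by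
    intro j
    have := congrFun hv (Sum.inr j)
    simp only [Sum.elim_inr, Sum.elim_comp_inl, Sum.elim_comp_inr, Pi.add_apply,
      Pi.zero_apply, Matrix.mulVec_diagonal] at this
    have hBu : (Bᵀ *ᵥ u) j = ∑ i, B i j * u i := by
      simp [Matrix.mulVec, dotProduct, Matrix.transpose_apply]
    rw [hBu] at this
    linarith
  -- quadratic form vanishes
  have hS1 : (∑ i, ∑ j, B i j * u i * u i) = ∑ i, (∑ j, B i j) * u i * u i := by
    refine Finset.sum_congr rfl fun i _ => ?_
    rw [Finset.sum_mul, Finset.sum_mul]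
  have hS2 : (∑ i, ∑ j, B i j * u i * w j) = -∑ i, ∑ j, B i j * u i * u i := by
    rw [hS1, ← Finset.sum_neg_distrib]
    refine Finset.sum_congr rfl fun i _ => ?_
    have : (∑ j, B i j * u i * w j) = u i * ∑ j, B i j * w j := by
      rw [Finset.mul_sum]; exact Finset.sum_congr rfl fun j _ => by ring
    rw [this, E1 i]; ring
  have hS3 : (∑ i, ∑ j, B i j * u i * w j) = -∑ i, ∑ j, B i j * w j * w j := by
    have hr : (∑ i, ∑ j, B i j * w j * w j) = ∑ j, (∑ i, B i j) * w j * w j := by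
      rw [Finset.sum_comm]
      exact Finset.sum_congr rfl fun j _ => by rw [Finset.sum_mul, Finset.sum_mul]
    rw [hr, Finset.sum_comm, ← Finset.sum_neg_distrib]
    refine Finset.sum_congr rfl fun j _ => ?_
    rw [← Finset.sum_mul, E2 j]; ring
  have hQ : (∑ i, ∑ j, B i j * (u i + w j) ^ 2) = 0 := by
    have hexp : (∑ i, ∑ j, B i j * (u i + w j) ^ 2) =
        (∑ i, ∑ j, B i j * u i * u i) + 2 * (∑ i, ∑ j, B i j * u i * w j)
          + ∑ i, ∑ j, B i j * w j * w j := by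
      simp only [Finset.mul_sum, ← Finset.sum_add_distrib]
      exact Finset.sum_congr rfl fun i _ => Finset.sum_congr rfl fun j _ => by ring
    rw [hexp]; linarith [hS2, hS3]
  have hterm : ∀ i j, B i j * (u i + w j) ^ 2 = 0 := by
    have hinn : ∀ i ∈ Finset.univ, (0:ℝ) ≤ ∑ j, B i j * (u i + w j) ^ 2 := fun i _ =>
      Finset.sum_nonneg fun j _ => mul_nonneg (hBnn i j) (sq_nonneg _)
    have h1 := (Finset.sum_eq_zero_iff_of_nonneg hinn).mp hQ
    intro i j
    exact (Finset.sum_eq_zero_iff_of_nonneg fun j _ =>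
      mul_nonneg (hBnn i j) (sq_nonneg _)).mp (h1 i (Finset.mem_univ i)) j (Finset.mem_univ j)
  have hcancel : ∀ i j, B i j * (u i + w j) = 0 := by
    intro i j
    rcases mul_eq_zero.mp (hterm i j) with h | h
    · rw [h, zero_mul]
    · rw [pow_eq_zero_iff (by norm_num) |>.mp h, mul_zero]
  have huw : ∀ i, u i + w (σ i) = 0 := by
    intro i
    have := hterm i (σ i)
    rcases mul_eq_zero.mp this with h | h
    · exact absurd h (hBσ i).ne'
    · exact pow_eq_zero_iff (by norm_num) |>.mp h
  -- compute the dot product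
  have hdot : grad ⬝ᵥ v = (∑ i, ((∑ j, B i j) - 1) * u i) + ∑ j, ((∑ i, B i j) - 1) * w j := by
    rw [hgrad, hv']
    simp [dotProduct, Fintype.sum_sum_type]
  have key : (∑ i, ∑ j, B i j * u i) + (∑ i, ∑ j, B i j * w j) = 0 := by
    rw [← Finset.sum_add_distrib]
    refine Finset.sum_eq_zero fun i _ => ?_
    rw [← Finset.sum_add_distrib]
    refine Finset.sum_eq_zero fun j _ => ?_
    have := hcancel i j; ring_nf; ring_nf at this; linarith
  have hsum : (∑ i, u i) + (∑ j, w j) = 0 := by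
    rw [← Equiv.sum_comp σ w, ← Finset.sum_add_distrib]
    exact Finset.sum_eq_zero fun i _ => huw i
  have hA1 : (∑ i, ((∑ j, B i j) - 1) * u i) = (∑ i, ∑ j, B i j * u i) - ∑ i, u i := by
    rw [← Finset.sum_sub_distrib]
    refine Finset.sum_congr rfl fun i _ => ?_
    rw [sub_mul, one_mul, Finset.sum_mul]
  have hA2 : (∑ j, ((∑ i, B i j) - 1) * w j) = (∑ j, ∑ i, B i j * w j) - ∑ j, w j := by
    rw [← Finset.sum_sub_distrib]
    refine Finset.sum_congr rfl fun j _ => ?_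
    rw [sub_mul, one_mul, Finset.sum_mul]
  have hc : (∑ i, ∑ j, B i j * w j) = ∑ j, ∑ i, B i j * w j := Finset.sum_comm
  rw [neg_dotProduct, neg_eq_zero, hdot, hA1, hA2]
  linarith [key, hsum, hc]
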